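/- Let K be the 2×2 matrix K = [[0,1],[−1,0]]. Let ε, Δt, τ > 0, γ > 0 and β ∈ ℝ, set δ = Δt/ε, λ = Δt/ε², μ_γ = 1 + γδ/τ, and define the 2×2 matrices M_γ = (μ_γ I₂ + γλβ K)/(μ_γ² + (γλβ)²) and R = (β τ² K + ε τ I₂)/(β² τ² + ε²). Then γλ M_γ − R = − M_γ R. -/
import Mathlib
set_option maxHeartbeats 2000000


/-- With `K = [[0,1],[-1,0]]`, `ε, Δt, τ, γ > 0`, `β ∈ ℝ`, `δ = Δt/ε`,
`λ = Δt/ε²`, `μ_γ = 1 + γδ/τ`, `M_γ = (μ_γI₂ + γλβK)/(μ_γ² + (γλβ)²)` and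
`R = (βτ²K + ετI₂)/(β²τ² + ε²)`, one has `γλM_γ − R = −M_γR`. -/
theorem stmt_14 (ε Δt τ γ β : ℝ) (hε : 0 < ε) (hΔt : 0 < Δt) (hτ : 0 < τ) (hγ : 0 < γ)
    (K : Matrix (Fin 2) (Fin 2) ℝ) (hK : K = !![0, 1; -1, 0])
    (δ lam μγ : ℝ) (hδ : δ = Δt / ε) (hlam : lam = Δt / ε ^ 2) (hμγ : μγ = 1 + γ * δ / τ)
    (Mγ R : Matrix (Fin 2) (Fin 2) ℝ)
    (hMγ : Mγ = (μγ ^ 2 + (γ * lam * β) ^ 2)⁻¹ •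
        (μγ • (1 : Matrix (Fin 2) (Fin 2) ℝ) + (γ * lam * β) • K))
    (hR : R = (β ^ 2 * τ ^ 2 + ε ^ 2)⁻¹ •
        ((β * τ ^ 2) • K + (ε * τ) • (1 : Matrix (Fin 2) (Fin 2) ℝ))) :
    (γ * lam) • Mγ - R = -(Mγ * R) := by
  have hμpos : 0 < μγ := by
    rw [hμγ, hδ]; positivity
  have hD : μγ ^ 2 + (γ * lam * β) ^ 2 ≠ 0 := by positivity
  have hE : β ^ 2 * τ ^ 2 + ε ^ 2 ≠ 0 := by positivity
  subst hK hMγ hR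
  ext i j
  fin_cases i <;> fin_cases j <;>
    simp [Matrix.mul_apply, Fin.sum_univ_succ, Matrix.one_apply] <;>
    rw [hμγ, hδ, hlam] at hD ⊢ <;>
    field_simp <;> ring
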